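/- ACD variational formula for 0 < α < 1 (finite case): for probability mass functions θ, ν on a finite set whose supports intersect, and any g : S → ℝ, (1/α) log ∑_x e^{α g(x)} θ(x) ≥ (1/(α−1)) log ∑_x e^{(α−1) g(x)} ν(x) − R_α(ν‖θ). -/

import Mathlib

open Finset Real
open Classical

/-- ACD inequality for 0 < α < 1 (finite case): for pmfs θ, ν with intersecting
supports and any g,
(1/α) log ∑ e^{αg} θ ≥ (1/(α-1)) log ∑ e^{(α-1)g} ν - R_α(ν‖θ). -/
theorem acd_inequality_small_alpha {S : Type} [Fintype S]
    (θ ν : S → ℝ) (g : S → ℝ) (α : ℝ) (hα0 : 0 < α) (hα1 : α < 1)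
    (hθ0 : ∀ x, 0 ≤ θ x) (hθ1 : ∑ x, θ x = 1)
    (hν0 : ∀ x, 0 ≤ ν x) (hν1 : ∑ x, ν x = 1)
    (hsupp : ∃ x, 0 < ν x ∧ 0 < θ x) :
    (1 / α) * Real.log (∑ x, Real.exp (α * g x) * θ x) ≥
      (1 / (α - 1)) * Real.log (∑ x, Real.exp ((α - 1) * g x) * ν x) -
        (1 / (α * (α - 1))) *
          Real.log (∑ x ∈ Finset.univ.filter (fun x => 0 < ν x * θ x),
            ν x ^ α * θ x ^ (1 - α)) := by
  obtain ⟨x0, hx0ν, hx0θ⟩ := hsupp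
  have h1α : (0:ℝ) < 1 - α := by linarith
  set A := ∑ x, Real.exp (α * g x) * θ x with hA
  set B := ∑ x, Real.exp ((α - 1) * g x) * ν x with hB
  set C := ∑ x ∈ Finset.univ.filter (fun x => 0 < ν x * θ x),
      ν x ^ α * θ x ^ (1 - α) with hC
  have hApos : 0 < A := by
    apply Finset.sum_pos' (fun x _ => mul_nonneg (Real.exp_pos _).le (hθ0 x))
    exact ⟨x0, Finset.mem_univ _, mul_pos (Real.exp_pos _) hx0θ⟩
  have hBpos : 0 < B := by
    apply Finset.sum_pos' (fun x _ => mul_nonneg (Real.exp_pos _).le (hν0 x))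
    exact ⟨x0, Finset.mem_univ _, mul_pos (Real.exp_pos _) hx0ν⟩
  have hCpos : 0 < C := by
    apply Finset.sum_pos' (fun x _ =>
      mul_nonneg (Real.rpow_nonneg (hν0 x) _) (Real.rpow_nonneg (hθ0 x) _))
    exact ⟨x0, Finset.mem_filter.2 ⟨Finset.mem_univ _, mul_pos hx0ν hx0θ⟩,
      mul_pos (Real.rpow_pos_of_pos hx0ν _) (Real.rpow_pos_of_pos hx0θ _)⟩
  -- rewrite C as a full sum
  have hCfull : C = ∑ x, ν x ^ α * θ x ^ (1 - α) := by
    rw [hC]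
    apply Finset.sum_filter_of_ne
    intro x _ hx
    by_contra hcon
    push_neg at hcon
    rcases mul_pos_iff.not.mp (by simpa using hcon) with h
    have hν : ν x = 0 ∨ θ x = 0 := by
      rcases lt_trichotomy (ν x) 0 with h1 | h1 | h1
      · exact absurd h1 (not_lt.2 (hν0 x))
      · exact Or.inl h1
      rcases lt_trichotomy (θ x) 0 with h2 | h2 | h2
      · exact absurd h2 (not_lt.2 (hθ0 x))
      · exact Or.inr h2
      · exact absurd (mul_pos h1 h2) (by simpa using hcon)
    rcases hν with h | h
    · exact hx (by rw [h, Real.zero_rpow hα0.ne', zero_mul])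
    · exact hx (by rw [h, Real.zero_rpow h1α.ne', mul_zero])
  -- Hölder: C ≤ B^α * A^(1-α)
  have holder : C ≤ B ^ α * A ^ (1 - α) := by
    rw [hCfull, hA, hB]
    have hpq : (1/α).HolderConjugate (1/(1-α)) :=
      Real.holderConjugate_one_div hα0 h1α (by ring)
    have key := Real.inner_le_Lp_mul_Lq_of_nonneg (s := Finset.univ)
      (f := fun x => (Real.exp ((α - 1) * g x) * ν x) ^ α)
      (g := fun x => (Real.exp (α * g x) * θ x) ^ (1 - α)) hpq
      (fun i _ => Real.rpow_nonneg (mul_nonneg (Real.exp_pos _).le (hν0 i)) _)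
      (fun i _ => Real.rpow_nonneg (mul_nonneg (Real.exp_pos _).le (hθ0 i)) _)
    have e1 : ∀ x : S, (Real.exp ((α - 1) * g x) * ν x) ^ α *
        (Real.exp (α * g x) * θ x) ^ (1 - α) = ν x ^ α * θ x ^ (1 - α) := by
      intro x
      rw [Real.mul_rpow (Real.exp_nonneg _) (hν0 x),
        Real.mul_rpow (Real.exp_nonneg _) (hθ0 x),
        ← Real.exp_mul, ← Real.exp_mul]
      have : Real.exp ((α - 1) * g x * α) * Real.exp (α * g x * (1 - α)) = 1 := by
        rw [← Real.exp_add]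
        norm_num
        ring
      calc Real.exp ((α - 1) * g x * α) * ν x ^ α *
            (Real.exp (α * g x * (1 - α)) * θ x ^ (1 - α))
          = (Real.exp ((α - 1) * g x * α) * Real.exp (α * g x * (1 - α))) *
            (ν x ^ α * θ x ^ (1 - α)) := by ring
        _ = ν x ^ α * θ x ^ (1 - α) := by rw [this, one_mul]
    have e2 : ∀ x : S, ((Real.exp ((α - 1) * g x) * ν x) ^ α) ^ (1/α)
        = Real.exp ((α - 1) * g x) * ν x := by
      intro x
      rw [← Real.rpow_mul (mul_nonneg (Real.exp_pos _).le (hν0 x)),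
        mul_one_div, div_self hα0.ne', Real.rpow_one]
    have e3 : ∀ x : S, ((Real.exp (α * g x) * θ x) ^ (1 - α)) ^ (1/(1-α))
        = Real.exp (α * g x) * θ x := by
      intro x
      rw [← Real.rpow_mul (mul_nonneg (Real.exp_pos _).le (hθ0 x)),
        mul_one_div, div_self h1α.ne', Real.rpow_one]
    simp only [e1, ← Real.rpow_natCast] at key
    calc ∑ x, ν x ^ α * θ x ^ (1 - α)
        ≤ (∑ x, ((Real.exp ((α - 1) * g x) * ν x) ^ α) ^ (1/α)) ^ (1/(1/α)) *
          (∑ x, ((Real.exp (α * g x) * θ x) ^ (1 - α)) ^ (1/(1-α))) ^ (1/(1/(1-α))) := by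
          simpa [one_div_one_div] using key
      _ = (∑ x, Real.exp ((α - 1) * g x) * ν x) ^ α *
          (∑ x, Real.exp (α * g x) * θ x) ^ (1 - α) := by
          simp only [e2, e3, one_div_one_div]
  have key : Real.log C ≤ α * Real.log B + (1 - α) * Real.log A := by
    calc Real.log C ≤ Real.log (B ^ α * A ^ (1 - α)) :=
          Real.log_le_log hCpos holder
      _ = α * Real.log B + (1 - α) * Real.log A := by
          rw [Real.log_mul (by positivity) (by positivity),
            Real.log_rpow hBpos, Real.log_rpow hApos]
  have hD : (0:ℝ) < α * (1 - α) := by positivity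
  have hdiff : (1/α) * Real.log A -
      ((1/(α-1)) * Real.log B - (1/(α*(α-1))) * Real.log C) =
      (α * Real.log B + (1 - α) * Real.log A - Real.log C) / (α * (1 - α)) := by
    have h1 : α ≠ 0 := hα0.ne'
    have h2 : α - 1 ≠ 0 := by linarith
    have h3 : 1 - α ≠ 0 := h1α.ne'
    field_simp
    ring
  have : 0 ≤ (α * Real.log B + (1 - α) * Real.log A - Real.log C) / (α * (1 - α)) :=
    div_nonneg (by linarith) hD.le
  linarith [hdiff ▸ this]
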